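/- Let φ ∈ H²(-b,0;ℝⁿ), x[τ] ∈ H²(0,T;ℝⁿ) with x[τ](0) = φ(0), and suppose τ ↦ x'[τ] is continuous with values in H¹(0,T;ℝⁿ). Define ψ(τ,t) = φ(t-τ) for t ∈ [0,τ] and ψ(τ,t) = x[τ](t-τ) for t ∈ (τ,T]. Then the difference quotient (ψ(τ+δ,·) - ψ(τ,·))/δ converges in L²(0,T;ℝⁿ) as δ → 0, and the limit equals -φ̇(t-τ) on [0,τ] and x'[τ](t-τ) - ẋ[τ](t-τ) on (τ,T]. -/

import Mathlib

open MeasureTheory Set Filter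

lemma tendsto_backward_quot {E : Type*} [NormedAddCommGroup E] [NormedSpace ℝ E]
    {f : ℝ → E} {f' : E} {x : ℝ} (h : HasDerivAt f f' x) :
    Tendsto (fun δ : ℝ => δ⁻¹ • (f (x - δ) - f x)) (nhdsWithin (0:ℝ) {0}ᶜ) (nhds (-f')) := by
  have h1 : Tendsto (fun δ : ℝ => x - δ) (nhdsWithin (0:ℝ) {0}ᶜ) (nhdsWithin x {x}ᶜ) := by
    apply tendsto_nhdsWithin_of_tendsto_nhds_of_eventually_within
    · have : Tendsto (fun δ : ℝ => x - δ) (nhds 0) (nhds x) := by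
        exact (continuous_const.sub continuous_id).tendsto' (0:ℝ) x (by simp)
      exact this.mono_left nhdsWithin_le_nhds
    · filter_upwards [self_mem_nhdsWithin] with δ hδ
      simp only [mem_compl_iff, mem_singleton_iff] at hδ ⊢
      intro hc
      apply hδ
      linarith [sub_eq_self.mp hc]
  have h2 := (hasDerivAt_iff_tendsto_slope.1 h).comp h1
  have h3 := h2.neg
  refine h3.congr fun δ => ?_
  simp only [Function.comp]
  rw [slope_def_module]
  have : x - δ - x = -δ := by ring
  rw [this, inv_neg, neg_smul, neg_neg]

set_option maxHeartbeats 2000000 in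
/-- Lemma piecewise*: with `ψ(σ,t) = φ(t-σ)` for `t ∈ [0,σ]` and
`ψ(σ,t) = x[σ](t-σ)` for `t ∈ (σ,T]`, the difference quotients
`(ψ(τ+δ,·) - ψ(τ,·))/δ` converge in `L²(0,T;ℝⁿ)` as `δ → 0` to the function equal to
`-φ̇(t-τ)` on `[0,τ]` and `x'[τ](t-τ) - ẋ[τ](t-τ)` on `(τ,T]`.
Here `X σ` is the solution family with time derivative `Xt σ` (continuous, i.e.
`x[σ] ∈ H²`), `W σ` is the `τ`-derivative family `x'[σ]`, continuous in `(σ,t)`. -/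
theorem piecewise_differentiation (n : ℕ) (b T : ℝ) (hb : 0 < b) (hT : 0 < T)
    (τ : ℝ) (hτ : τ ∈ Ioo (0:ℝ) T) (hτb : τ ∈ Icc (0:ℝ) b)
    (φ φ' : ℝ → EuclideanSpace ℝ (Fin n))
    (hφ' : ∀ t ∈ Icc (-b) (0:ℝ), HasDerivAt φ (φ' t) t)
    (hφ'c : ContinuousOn φ' (Icc (-b) 0))
    (X Xt W : ℝ → ℝ → EuclideanSpace ℝ (Fin n))
    (hX0 : ∀ σ ∈ Icc (0:ℝ) b, X σ 0 = φ 0)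
    (hXt : ∀ σ ∈ Icc (0:ℝ) b, ∀ t ∈ Icc (0:ℝ) T, HasDerivAt (X σ) (Xt σ t) t)
    (hXtc : ∀ σ ∈ Icc (0:ℝ) b, ContinuousOn (Xt σ) (Icc 0 T))
    -- τ ↦ x'[τ] continuous with values in H¹(0,T) ⊂ C([0,T]); pointwise version:
    (hW : ∀ σ ∈ Icc (0:ℝ) b, ∀ t ∈ Icc (0:ℝ) T,
      HasDerivWithinAt (fun ρ => X ρ t) (W σ t) (Icc 0 b) σ)
    (hWc : ContinuousOn (fun p : ℝ × ℝ => W p.1 p.2) (Icc 0 b ×ˢ Icc 0 T)) :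
    Tendsto (fun δ : ℝ =>
        (eLpNorm (fun t =>
            δ⁻¹ • ((if t ≤ τ + δ then φ (t - τ - δ) else X (τ + δ) (t - τ - δ))
              - (if t ≤ τ then φ (t - τ) else X τ (t - τ)))
            - (if t ≤ τ then -φ' (t - τ) else W τ (t - τ) - Xt τ (t - τ))) 2
          (volume.restrict (Ioo 0 T))).toReal)
      (nhdsWithin 0 {δ : ℝ | τ + δ ∈ Icc (0:ℝ) b ∧ τ + δ < T ∧ δ ≠ 0}) (nhds 0) := by
  classical
  obtain ⟨hτ0, hτT⟩ := hτ
  obtain ⟨-, hτb'⟩ := hτb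
  set S : Set ℝ := {δ : ℝ | τ + δ ∈ Icc (0:ℝ) b ∧ τ + δ < T ∧ δ ≠ 0} with hS
  set l : Filter ℝ := nhdsWithin 0 S with hl
  set μ : Measure ℝ := volume.restrict (Ioo 0 T) with hμ
  set F : ℝ → ℝ → EuclideanSpace ℝ (Fin n) := fun δ t =>
      δ⁻¹ • ((if t ≤ τ + δ then φ (t - τ - δ) else X (τ + δ) (t - τ - δ))
        - (if t ≤ τ then φ (t - τ) else X τ (t - τ)))
      - (if t ≤ τ then -φ' (t - τ) else W τ (t - τ) - Xt τ (t - τ)) with hFdef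
  show Tendsto (fun δ => (eLpNorm (F δ) 2 μ).toReal) l (nhds 0)
  haveI : Fact (volume (Ioo (0:ℝ) T) < ⊤) := ⟨by simp [Real.volume_Ioo]⟩
  haveI : IsFiniteMeasure μ := by rw [hμ]; infer_instance
  -- membership facts
  have hτmem : τ ∈ Icc (0:ℝ) b := ⟨le_of_lt hτ0, hτb'⟩
  have lS : l ≤ nhdsWithin (0:ℝ) {0}ᶜ := by
    apply nhdsWithin_mono
    intro δ hδ
    exact hδ.2.2
  have habs_tendsto : Tendsto (fun δ : ℝ => |δ|) l (nhds 0) := by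
    simpa using (continuous_abs.tendsto (0:ℝ)).mono_left (lS.trans nhdsWithin_le_nhds)
  -- bounds
  obtain ⟨Mφ, hMφ⟩ := isCompact_Icc.exists_bound_of_continuousOn hφ'c
  obtain ⟨MX, hMX⟩ := isCompact_Icc.exists_bound_of_continuousOn (hXtc τ hτmem)
  obtain ⟨MW, hMW⟩ := (isCompact_Icc.prod isCompact_Icc).exists_bound_of_continuousOn hWc
  have hMφ0 : 0 ≤ Mφ := le_trans (norm_nonneg _) (hMφ 0 ⟨by linarith, le_refl 0⟩)
  have hMX0 : 0 ≤ MX := le_trans (norm_nonneg _) (hMX 0 ⟨le_refl 0, le_of_lt hT⟩)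
  have hMW0 : 0 ≤ MW := le_trans (norm_nonneg _)
    (hMW (0, 0) ⟨⟨le_refl 0, le_of_lt hb⟩, ⟨le_refl 0, le_of_lt hT⟩⟩)
  set K : ℝ := Mφ + MX + MW with hK
  have hK0 : 0 ≤ K := by positivity
  -- continuity facts
  have hφc : ContinuousOn φ (Icc (-b) 0) := fun x hx => (hφ' x hx).continuousAt.continuousWithinAt
  have hXc : ∀ σ ∈ Icc (0:ℝ) b, ContinuousOn (X σ) (Icc 0 T) :=
    fun σ hσ x hx => (hXt σ hσ x hx).continuousAt.continuousWithinAt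
  have hWc1 : ∀ s ∈ Icc (0:ℝ) T, ContinuousOn (fun ρ => W ρ s) (Icc 0 b) := by
    intro s hs
    exact hWc.comp (Continuous.continuousOn (continuous_id.prodMk continuous_const))
      (fun ρ hρ => ⟨hρ, hs⟩)
  have hWc2 : ContinuousOn (W τ) (Icc (0:ℝ) T) := by
    exact hWc.comp (Continuous.continuousOn (continuous_const.prodMk continuous_id))
      (fun t ht => ⟨hτmem, ht⟩)
  -- mean value inequalities
  have mvφ : ∀ x ∈ Icc (-b) (0:ℝ), ∀ y ∈ Icc (-b) (0:ℝ), ‖φ y - φ x‖ ≤ Mφ * |y - x| := by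
    intro x hx y hy
    have := (convex_Icc (-b) (0:ℝ)).norm_image_sub_le_of_norm_hasDerivWithin_le
      (fun z hz => (hφ' z hz).hasDerivWithinAt) hMφ hx hy
    simpa [Real.norm_eq_abs] using this
  have mvX : ∀ x ∈ Icc (0:ℝ) T, ∀ y ∈ Icc (0:ℝ) T, ‖X τ y - X τ x‖ ≤ MX * |y - x| := by
    intro x hx y hy
    have := (convex_Icc (0:ℝ) T).norm_image_sub_le_of_norm_hasDerivWithin_le
      (fun z hz => (hXt τ hτmem z hz).hasDerivWithinAt) hMX hx hy
    simpa [Real.norm_eq_abs] using this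
  have mvW : ∀ s ∈ Icc (0:ℝ) T, ∀ x ∈ Icc (0:ℝ) b, ∀ y ∈ Icc (0:ℝ) b,
      ‖X y s - X x s‖ ≤ MW * |y - x| := by
    intro s hs x hx y hy
    have := (convex_Icc (0:ℝ) b).norm_image_sub_le_of_norm_hasDerivWithin_le
      (fun z hz => hW z hz s hs) (fun z hz => hMW (z, s) ⟨hz, hs⟩) hx hy
    simpa [Real.norm_eq_abs] using this
  -- integral identity
  have key : ∀ σ₁ ∈ Icc (0:ℝ) b, ∀ σ₂ ∈ Icc (0:ℝ) b, ∀ s ∈ Icc (0:ℝ) T,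
      (∫ ρ in σ₁..σ₂, W ρ s) = X σ₂ s - X σ₁ s := by
    have aux : ∀ σ₁ ∈ Icc (0:ℝ) b, ∀ σ₂ ∈ Icc (0:ℝ) b, σ₁ ≤ σ₂ → ∀ s ∈ Icc (0:ℝ) T,
        (∫ ρ in σ₁..σ₂, W ρ s) = X σ₂ s - X σ₁ s := by
      intro σ₁ h₁ σ₂ h₂ h12 s hs
      apply intervalIntegral.integral_eq_sub_of_hasDeriv_right_of_le h12
      · intro ρ hρ
        exact ((hW ρ ⟨le_trans h₁.1 hρ.1, le_trans hρ.2 h₂.2⟩ s hs).continuousWithinAt).mono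
          (Icc_subset_Icc h₁.1 h₂.2)
      · intro ρ hρ
        have hρmem : ρ ∈ Ioo (0:ℝ) b := ⟨lt_of_le_of_lt h₁.1 hρ.1, lt_of_lt_of_le hρ.2 h₂.2⟩
        have := (hW ρ ⟨le_of_lt hρmem.1, le_of_lt hρmem.2⟩ s hs).hasDerivAt
          (Icc_mem_nhds hρmem.1 hρmem.2)
        exact this.hasDerivWithinAt
      · exact ((hWc1 s hs).mono (uIcc_subset_Icc h₁ h₂)).intervalIntegrable
    intro σ₁ h₁ σ₂ h₂ s hs
    rcases le_total σ₁ σ₂ with h | h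
    · exact aux σ₁ h₁ σ₂ h₂ h s hs
    · rw [intervalIntegral.integral_symm, aux σ₂ h₂ σ₁ h₁ h s hs, neg_sub]
  -- pointwise convergence
  have hpt : ∀ t ∈ Ioo (0:ℝ) T, t ≠ τ → Tendsto (fun δ => F δ t) l (nhds 0) := by
    intro t ht hne
    rcases lt_or_gt_of_ne hne with hlt | hgt
    · -- case t < τ
      have hmemφ : t - τ ∈ Icc (-b) (0:ℝ) := ⟨by linarith [ht.1], by linarith⟩
      have hq := (tendsto_backward_quot (hφ' (t - τ) hmemφ)).mono_left lS
      have h0 : Tendsto (fun δ : ℝ => δ⁻¹ • (φ (t - τ - δ) - φ (t - τ)) - (-φ' (t - τ)))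
          l (nhds 0) := by
        have := hq.sub (tendsto_const_nhds (x := -φ' (t - τ)) (f := l))
        simpa using this
      apply h0.congr'
      have hev : ∀ᶠ δ in l, |δ| < τ - t := habs_tendsto.eventually_lt_const (by linarith)
      filter_upwards [hev] with δ hδ
      have h1 : t ≤ τ := le_of_lt hlt
      have h2 : t ≤ τ + δ := by
        have := neg_abs_le δ
        linarith
      simp only [hFdef, if_pos h1, if_pos h2]
    · -- case t > τ
      have hsmem : t - τ ∈ Icc (0:ℝ) T := ⟨by linarith, by linarith [ht.2]⟩
      have hq2 := (tendsto_backward_quot (hXt τ hτmem (t - τ) hsmem)).mono_left lS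
      have h2 : Tendsto (fun δ : ℝ => δ⁻¹ • (X τ (t - τ - δ) - X τ (t - τ)) + Xt τ (t - τ))
          l (nhds 0) := by
        have := hq2.add (tendsto_const_nhds (x := Xt τ (t - τ)) (f := l))
        simpa using this
      have h1 : Tendsto (fun δ : ℝ =>
          δ⁻¹ • (X (τ + δ) (t - τ - δ) - X τ (t - τ - δ)) - W τ (t - τ)) l (nhds 0) := by
        rw [NormedAddCommGroup.tendsto_nhds_zero]
        intro ε hε
        have hWct : ContinuousWithinAt (fun p : ℝ × ℝ => W p.1 p.2)
            (Icc 0 b ×ˢ Icc 0 T) (τ, t - τ) := hWc _ ⟨hτmem, hsmem⟩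
        rw [Metric.continuousWithinAt_iff] at hWct
        obtain ⟨r, hr0, hr⟩ := hWct (ε/2) (by linarith)
        have hev1 : ∀ᶠ δ in l, |δ| < min r (t - τ) :=
          habs_tendsto.eventually_lt_const (lt_min hr0 (by linarith))
        filter_upwards [hev1, self_mem_nhdsWithin] with δ hδ hδS
        obtain ⟨hδb, hδT, hδ0⟩ := hδS
        have habs0 : (0:ℝ) < |δ| := abs_pos.2 hδ0
        have hδr : |δ| < r := lt_of_lt_of_le hδ (min_le_left _ _)
        have hδs : |δ| < t - τ := lt_of_lt_of_le hδ (min_le_right _ _)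
        have hδs' := abs_lt.1 hδs
        have hsδ : t - τ - δ ∈ Icc (0:ℝ) T :=
          ⟨by linarith [hδs'.2], by linarith [ht.2, hδb.1]⟩
        have hXint := key τ hτmem (τ + δ) hδb (t - τ - δ) hsδ
        have hWτ : W τ (t - τ) = δ⁻¹ • (∫ _ρ in τ..(τ + δ), W τ (t - τ)) := by
          rw [intervalIntegral.integral_const, show τ + δ - τ = δ by ring, smul_smul,
            inv_mul_cancel₀ hδ0, one_smul]
        rw [← hXint, hWτ, ← smul_sub]
        have hint1 : IntervalIntegrable (fun ρ => W ρ (t - τ - δ)) volume τ (τ + δ) :=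
          ((hWc1 _ hsδ).mono (uIcc_subset_Icc hτmem hδb)).intervalIntegrable
        rw [← intervalIntegral.integral_sub hint1 intervalIntegrable_const]
        rw [norm_smul, Real.norm_eq_abs, abs_inv]
        have hnorm : ‖∫ ρ in τ..(τ + δ), (W ρ (t - τ - δ) - W τ (t - τ))‖ ≤ (ε/2) * |τ + δ - τ| := by
          apply intervalIntegral.norm_integral_le_of_norm_le_const
          intro ρ hρ
          have hρ' := hρ
          rw [uIoc] at hρ'
          have hup : ρ ≤ τ + |δ| :=
            le_trans hρ'.2 (sup_le (by linarith [abs_nonneg δ]) (by linarith [le_abs_self δ]))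
          have hlo : τ - |δ| ≤ ρ :=
            le_trans (le_inf (by linarith [abs_nonneg δ]) (by linarith [neg_abs_le δ]))
              (le_of_lt hρ'.1)
          have hρb : ρ ∈ Icc (0:ℝ) b :=
            ⟨le_trans (le_inf hτmem.1 hδb.1) (le_of_lt hρ'.1), le_trans hρ'.2 (sup_le hτb' hδb.2)⟩
          have hdist : dist (ρ, t - τ - δ) (τ, t - τ) < r := by
            rw [Prod.dist_eq]
            apply max_lt
            · rw [Real.dist_eq]
              have : |ρ - τ| ≤ |δ| := abs_le.2 ⟨by linarith, by linarith⟩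
              linarith
            · rw [Real.dist_eq, show t - τ - δ - (t - τ) = -δ by ring, abs_neg]
              exact hδr
          have hd := hr (x := (ρ, t - τ - δ)) ⟨hρb, hsδ⟩ hdist
          rw [dist_eq_norm] at hd
          exact le_of_lt hd
        have hδabs : |τ + δ - τ| = |δ| := by rw [show τ + δ - τ = δ by ring]
        rw [hδabs] at hnorm
        calc |δ|⁻¹ * ‖∫ ρ in τ..(τ + δ), (W ρ (t - τ - δ) - W τ (t - τ))‖
            ≤ |δ|⁻¹ * ((ε/2) * |δ|) := by
              apply mul_le_mul_of_nonneg_left hnorm (inv_nonneg.2 (abs_nonneg δ))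
          _ = ε/2 := by field_simp
          _ < ε := by linarith
      have hsum := h1.add h2
      rw [add_zero] at hsum
      apply hsum.congr'
      have hev : ∀ᶠ δ in l, |δ| < t - τ := habs_tendsto.eventually_lt_const (by linarith)
      filter_upwards [hev] with δ hδ
      have h1' : ¬ t ≤ τ := not_le.2 hgt
      have h2' : ¬ t ≤ τ + δ := by
        have := le_abs_self δ
        push_neg
        linarith
      simp only [hFdef, if_neg h1', if_neg h2']
      rw [smul_sub, smul_sub, smul_sub]
      abel
  -- uniform bound
  have hbd : ∀ δ ∈ S, ∀ t ∈ Ioo (0:ℝ) T, ‖F δ t‖ ≤ K + K := by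
    intro δ hδS t ht
    obtain ⟨hδb, hδT, hδ0⟩ := hδS
    obtain ⟨ht0, htT⟩ := ht
    have habs0 : (0:ℝ) < |δ| := abs_pos.2 hδ0
    have hG : ‖(if t ≤ τ then -φ' (t - τ) else W τ (t - τ) - Xt τ (t - τ))‖ ≤ K := by
      by_cases h : t ≤ τ
      · rw [if_pos h, norm_neg]
        have hmem : t - τ ∈ Icc (-b) (0:ℝ) := ⟨by linarith, by linarith⟩
        have := hMφ _ hmem
        rw [hK]; linarith
      · rw [if_neg h]
        push_neg at h
        have hmem : t - τ ∈ Icc (0:ℝ) T := ⟨by linarith, by linarith⟩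
        calc ‖W τ (t - τ) - Xt τ (t - τ)‖ ≤ ‖W τ (t - τ)‖ + ‖Xt τ (t - τ)‖ := norm_sub_le _ _
          _ ≤ K := by
              have h1 := hMW (τ, t - τ) ⟨hτmem, hmem⟩
              have h2 := hMX _ hmem
              rw [hK]; simp only at h1; linarith
    have hP : ‖(if t ≤ τ + δ then φ (t - τ - δ) else X (τ + δ) (t - τ - δ))
        - (if t ≤ τ then φ (t - τ) else X τ (t - τ))‖ ≤ K * |δ| := by
      have hKmul : ∀ M : ℝ, 0 ≤ M → M ≤ K → M * |δ| ≤ K * |δ| :=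
        fun M _ hMK => mul_le_mul_of_nonneg_right hMK (abs_nonneg δ)
      by_cases h1 : t ≤ τ + δ <;> by_cases h2 : t ≤ τ
      · -- both φ
        rw [if_pos h1, if_pos h2]
        have hx : t - τ ∈ Icc (-b) (0:ℝ) := ⟨by linarith, by linarith⟩
        have hy : t - τ - δ ∈ Icc (-b) (0:ℝ) := ⟨by linarith [hδb.2], by linarith⟩
        have e := mvφ _ hx _ hy
        rw [show t - τ - δ - (t - τ) = -δ by ring, abs_neg] at e
        calc ‖φ (t - τ - δ) - φ (t - τ)‖ ≤ Mφ * |δ| := e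
          _ ≤ K * |δ| := hKmul _ hMφ0 (by rw [hK]; linarith)
      · -- δ > 0, τ < t ≤ τ + δ
        push_neg at h2
        rw [if_pos h1, if_neg (not_le.2 h2)]
        have hδpos : 0 < δ := by linarith
        have hsδ : t - τ - δ ∈ Icc (-b) (0:ℝ) := ⟨by linarith [hδb.2], by linarith⟩
        have hs : t - τ ∈ Icc (0:ℝ) T := ⟨by linarith, by linarith [hδb.1]⟩
        have h0b : (0:ℝ) ∈ Icc (-b) (0:ℝ) := ⟨by linarith, le_refl 0⟩
        have h0T : (0:ℝ) ∈ Icc (0:ℝ) T := ⟨le_refl 0, le_of_lt hT⟩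
        have e1 := mvφ 0 h0b _ hsδ
        have e2 := mvX _ hs 0 h0T
        rw [hX0 τ hτmem] at e2
        have tri : ‖φ (t - τ - δ) - X τ (t - τ)‖
            ≤ ‖φ (t - τ - δ) - φ 0‖ + ‖φ 0 - X τ (t - τ)‖ := by
          have := norm_add_le (φ (t - τ - δ) - φ 0) (φ 0 - X τ (t - τ))
          simpa [sub_add_sub_cancel] using this
        have habs1 : |t - τ - δ - 0| ≤ |δ| := by
          rw [sub_zero, abs_le]
          constructor
          · have := neg_abs_le δ; have := le_abs_self δ; linarith
          · have := le_abs_self δ; linarith [abs_nonneg δ]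
        have habs2 : |0 - (t - τ)| ≤ |δ| := by
          rw [zero_sub, abs_neg, abs_le]
          have := le_abs_self δ
          constructor <;> [linarith [abs_nonneg δ]; linarith]
        calc ‖φ (t - τ - δ) - X τ (t - τ)‖
            ≤ Mφ * |t - τ - δ - 0| + MX * |0 - (t - τ)| := by linarith
          _ ≤ Mφ * |δ| + MX * |δ| := by
              have := mul_le_mul_of_nonneg_left habs1 hMφ0
              have := mul_le_mul_of_nonneg_left habs2 hMX0
              linarith
          _ ≤ K * |δ| := by
              rw [hK]
              nlinarith [abs_nonneg δ]
      · -- δ < 0, τ + δ < t ≤ τ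
        push_neg at h1
        rw [if_neg (not_le.2 h1), if_pos h2]
        have hδneg : δ < 0 := by linarith
        have hsδ : t - τ - δ ∈ Icc (0:ℝ) T := ⟨by linarith, by linarith [hδb.1]⟩
        have hs : t - τ ∈ Icc (-b) (0:ℝ) := ⟨by linarith [hδb.1], by linarith⟩
        have h0b : (0:ℝ) ∈ Icc (-b) (0:ℝ) := ⟨by linarith, le_refl 0⟩
        have h0T : (0:ℝ) ∈ Icc (0:ℝ) T := ⟨le_refl 0, le_of_lt hT⟩
        have e1 := mvW _ hsδ τ hτmem (τ + δ) hδb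
        rw [show τ + δ - τ = δ by ring] at e1
        have e2 := mvX 0 h0T _ hsδ
        rw [hX0 τ hτmem] at e2
        have e3 := mvφ _ hs 0 h0b
        have tri : ‖X (τ + δ) (t - τ - δ) - φ (t - τ)‖
            ≤ ‖X (τ + δ) (t - τ - δ) - X τ (t - τ - δ)‖ + ‖X τ (t - τ - δ) - φ 0‖
              + ‖φ 0 - φ (t - τ)‖ := by
          have e4 := norm_add_le (X τ (t - τ - δ) - φ 0) (φ 0 - φ (t - τ))
          rw [sub_add_sub_cancel] at e4
          have e5 := norm_add_le (X (τ + δ) (t - τ - δ) - X τ (t - τ - δ))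
            (X τ (t - τ - δ) - φ (t - τ))
          rw [sub_add_sub_cancel] at e5
          linarith
        have habs1 : |t - τ - δ - 0| ≤ |δ| := by
          rw [sub_zero, abs_le]
          have := neg_abs_le δ; have := le_abs_self δ
          constructor <;> linarith
        have habs2 : |0 - (t - τ)| ≤ |δ| := by
          rw [zero_sub, abs_neg, abs_le]
          have := neg_abs_le δ
          constructor <;> linarith
        calc ‖X (τ + δ) (t - τ - δ) - φ (t - τ)‖
            ≤ MW * |δ| + MX * |t - τ - δ - 0| + Mφ * |0 - (t - τ)| := by linarith
          _ ≤ MW * |δ| + MX * |δ| + Mφ * |δ| := by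
              have := mul_le_mul_of_nonneg_left habs1 hMX0
              have := mul_le_mul_of_nonneg_left habs2 hMφ0
              linarith
          _ ≤ K * |δ| := by rw [hK]; nlinarith [abs_nonneg δ]
      · -- both X
        push_neg at h1 h2
        rw [if_neg (not_le.2 h1), if_neg (not_le.2 h2)]
        have hs : t - τ ∈ Icc (0:ℝ) T := ⟨by linarith, by linarith⟩
        have hsδ : t - τ - δ ∈ Icc (0:ℝ) T := ⟨by linarith, by linarith [hδb.1]⟩
        have e1 := mvW _ hsδ τ hτmem (τ + δ) hδb
        rw [show τ + δ - τ = δ by ring] at e1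
        have e2 := mvX _ hs _ hsδ
        rw [show t - τ - δ - (t - τ) = -δ by ring, abs_neg] at e2
        have tri : ‖X (τ + δ) (t - τ - δ) - X τ (t - τ)‖
            ≤ ‖X (τ + δ) (t - τ - δ) - X τ (t - τ - δ)‖ + ‖X τ (t - τ - δ) - X τ (t - τ)‖ := by
          have := norm_add_le (X (τ + δ) (t - τ - δ) - X τ (t - τ - δ))
            (X τ (t - τ - δ) - X τ (t - τ))
          simpa [sub_add_sub_cancel] using this
        calc ‖X (τ + δ) (t - τ - δ) - X τ (t - τ)‖ ≤ MW * |δ| + MX * |δ| := by linarith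
          _ ≤ K * |δ| := by rw [hK]; nlinarith [abs_nonneg δ]
    have hsmul : ‖δ⁻¹ • ((if t ≤ τ + δ then φ (t - τ - δ) else X (τ + δ) (t - τ - δ))
        - (if t ≤ τ then φ (t - τ) else X τ (t - τ)))‖ ≤ K := by
      rw [norm_smul, Real.norm_eq_abs, abs_inv]
      have := mul_le_mul_of_nonneg_left hP (inv_nonneg.2 (abs_nonneg δ))
      rw [mul_comm K, ← mul_assoc, inv_mul_cancel₀ (ne_of_gt habs0), one_mul] at this
      exact this
    calc ‖F δ t‖ ≤ ‖δ⁻¹ • ((if t ≤ τ + δ then φ (t - τ - δ) else X (τ + δ) (t - τ - δ))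
          - (if t ≤ τ then φ (t - τ) else X τ (t - τ)))‖
          + ‖(if t ≤ τ then -φ' (t - τ) else W τ (t - τ) - Xt τ (t - τ))‖ := by
            simp only [hFdef]; exact norm_sub_le _ _
      _ ≤ K + K := by linarith
  -- measurability
  have piece : ∀ (c : ℝ) (u v : ℝ → EuclideanSpace ℝ (Fin n)),
      ContinuousOn u (Iic c ∩ Ioo 0 T) → ContinuousOn v (Ioi c ∩ Ioo 0 T) →
      AEStronglyMeasurable (fun t => if t ≤ c then u t else v t) μ := by
    intro c u v hu hv
    have heq : (fun t => if t ≤ c then u t else v t) = (Iic c).piecewise u v := by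
      ext t
      by_cases h : t ≤ c
      · simp [Set.piecewise, mem_Iic, h]
      · simp [Set.piecewise, mem_Iic, h]
    rw [heq]
    apply AEStronglyMeasurable.piecewise measurableSet_Iic
    · rw [hμ, Measure.restrict_restrict measurableSet_Iic]
      exact hu.aestronglyMeasurable (measurableSet_Iic.inter measurableSet_Ioo)
    · rw [hμ, Measure.restrict_restrict measurableSet_Iic.compl, compl_Iic]
      exact hv.aestronglyMeasurable (measurableSet_Ioi.inter measurableSet_Ioo)
  have hmeas : ∀ δ ∈ S, AEStronglyMeasurable (F δ) μ := by
    intro δ hδS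
    obtain ⟨hδb, hδT, hδ0⟩ := hδS
    have hcs : Continuous (fun t : ℝ => t - τ - δ) :=
      (continuous_id.sub continuous_const).sub continuous_const
    have hcs2 : Continuous (fun t : ℝ => t - τ) := continuous_id.sub continuous_const
    have m1 : AEStronglyMeasurable
        (fun t => if t ≤ τ + δ then φ (t - τ - δ) else X (τ + δ) (t - τ - δ)) μ := by
      apply piece
      · apply hφc.comp hcs.continuousOn
        intro t ht
        obtain ⟨ht1, ht2, ht3⟩ := ht
        rw [mem_Iic] at ht1
        simp only [mem_Icc]; constructor <;> linarith [hδb.1, hδb.2]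
      · apply (hXc (τ + δ) hδb).comp hcs.continuousOn
        intro t ht
        obtain ⟨ht1, ht2, ht3⟩ := ht
        rw [mem_Ioi] at ht1
        simp only [mem_Icc]; constructor <;> linarith [hδb.1, hδb.2]
    have m2 : AEStronglyMeasurable
        (fun t => if t ≤ τ then φ (t - τ) else X τ (t - τ)) μ := by
      apply piece
      · apply hφc.comp hcs2.continuousOn
        intro t ht
        obtain ⟨ht1, ht2, ht3⟩ := ht
        rw [mem_Iic] at ht1
        simp only [mem_Icc]; constructor <;> linarith [hδb.1, hδb.2]
      · apply (hXc τ hτmem).comp hcs2.continuousOn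
        intro t ht
        obtain ⟨ht1, ht2, ht3⟩ := ht
        rw [mem_Ioi] at ht1
        simp only [mem_Icc]; constructor <;> linarith [hδb.1, hδb.2]
    have m3 : AEStronglyMeasurable
        (fun t => if t ≤ τ then -φ' (t - τ) else W τ (t - τ) - Xt τ (t - τ)) μ := by
      apply piece
      · apply ContinuousOn.neg
        apply hφ'c.comp hcs2.continuousOn
        intro t ht
        obtain ⟨ht1, ht2, ht3⟩ := ht
        rw [mem_Iic] at ht1
        simp only [mem_Icc]; constructor <;> linarith [hδb.1, hδb.2]
      · apply ContinuousOn.sub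
        · apply hWc2.comp hcs2.continuousOn
          intro t ht
          obtain ⟨ht1, ht2, ht3⟩ := ht
          rw [mem_Ioi] at ht1
          simp only [mem_Icc]; constructor <;> linarith [hδb.1, hδb.2]
        · apply (hXtc τ hτmem).comp hcs2.continuousOn
          intro t ht
          obtain ⟨ht1, ht2, ht3⟩ := ht
          rw [mem_Ioi] at ht1
          simp only [mem_Icc]; constructor <;> linarith [hδb.1, hδb.2]
    exact ((m1.sub m2).const_smul δ⁻¹).sub m3
  -- a.e. facts
  have hae_mem : ∀ᵐ t ∂μ, t ∈ Ioo (0:ℝ) T := by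
    rw [hμ]; exact ae_restrict_mem measurableSet_Ioo
  have hae_ne : ∀ᵐ t ∂μ, t ≠ τ := by
    rw [ae_iff]
    simp only [ne_eq, not_not, setOf_eq_eq_singleton]
    rw [hμ, Measure.restrict_apply (measurableSet_singleton τ)]
    exact measure_mono_null inter_subset_left Real.volume_singleton
  -- dominated convergence for the squared norms
  have hInt : Tendsto (fun δ => ∫ t, ‖F δ t‖ ^ 2 ∂μ) l (nhds 0) := by
    have h0 : (0:ℝ) = ∫ (_t : ℝ), (0:ℝ) ∂μ := by simp
    rw [h0]
    apply tendsto_integral_filter_of_dominated_convergence (bound := fun _ => (K + K) ^ 2)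
    · filter_upwards [self_mem_nhdsWithin] with δ hδ
      exact ((hmeas δ hδ).norm.aemeasurable.pow_const 2).aestronglyMeasurable
    · filter_upwards [self_mem_nhdsWithin] with δ hδ
      filter_upwards [hae_mem] with t ht
      rw [Real.norm_eq_abs, abs_of_nonneg (by positivity)]
      exact pow_le_pow_left₀ (norm_nonneg _) (hbd δ hδ t ht) 2
    · exact integrable_const _
    · filter_upwards [hae_mem, hae_ne] with t ht hne
      have h1 := ((hpt t ht hne).norm).pow 2
      rw [norm_zero] at h1
      simpa using h1
  -- assembly
  have hrpow : Tendsto (fun x : ℝ => x ^ ((2:ℝ)⁻¹)) (nhds 0) (nhds 0) := by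
    have h1 := (Real.continuousAt_rpow_const 0 ((2:ℝ)⁻¹) (Or.inr (by norm_num))).tendsto
    rwa [Real.zero_rpow (by norm_num : ((2:ℝ)⁻¹) ≠ 0)] at h1
  have hcomp := hrpow.comp hInt
  apply hcomp.congr'
  filter_upwards [self_mem_nhdsWithin] with δ hδ
  have hmem : MemLp (F δ) 2 μ :=
    MemLp.of_bound (hmeas δ hδ) (K + K)
      (by filter_upwards [hae_mem] with t ht; exact hbd δ hδ t ht)
  have hsn := hmem.eLpNorm_eq_integral_rpow_norm (by norm_num) (by norm_num)
  have h2r : ((2:ENNReal)).toReal = (2:ℝ) := by norm_num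
  rw [h2r] at hsn
  have hinteq : (∫ a, ‖F δ a‖ ^ (2:ℝ) ∂μ) = ∫ a, ‖F δ a‖ ^ 2 ∂μ := by
    apply integral_congr_ae
    filter_upwards with a
    rw [Real.rpow_two]
  rw [hinteq] at hsn
  show (fun x : ℝ => x ^ ((2:ℝ)⁻¹)) ((fun δ => ∫ t, ‖F δ t‖ ^ 2 ∂μ) δ)
      = (eLpNorm (F δ) 2 μ).toReal
  rw [hsn, ENNReal.toReal_ofReal]
  exact Real.rpow_nonneg (integral_nonneg (fun a => by positivity)) _
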